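/- arXiv:2501.06672 — 3 statements merged into one kernel-verified Lean document; each statement's English description precedes it below -/
import Mathlib

section
/- Fix 0 < k < 1 and T > 0, let α_k(t) = 1 + k t, and let Q̂ = {(x,t) ∈ ℝ² : 0 < t < T, 0 < x < α_k(t)}. Assume T > (exp(2k(1+k)/(1−k)³) − 1)/k. Let φ : ℝ² → ℝ be of class C². If φ satisfies the wave equation ∂²φ/∂t² (x,t) = ∂²φ/∂x² (x,t) for all (x,t) ∈ Q̂, the homogeneous Dirichlet conditions φ(0,t) = 0 and φ(α_k(t), t) = 0 for all t ∈ [0,T], and the additional Neumann condition ∂φ/∂x (0,t) = 0 for all t ∈ (0,T), then φ(x,t) = 0 for all (x,t) ∈ Q̂. -/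
open Set

private lemma eq01' {h : ℝ → ℝ} (hc : Continuous h)
    (hd : ∀ σ ∈ Set.Ioo (0:ℝ) 1, HasDerivAt h 0 σ) : h 1 = h 0 := by
  have hconst : ∀ σ ∈ Set.Ioc (0:ℝ) 1, h 1 = h σ := by
    intro σ hσ
    rcases eq_or_lt_of_le hσ.2 with h1 | h1
    · rw [h1]
    · exact constant_of_has_deriv_right_zero hc.continuousOn
        (fun y hy => (hd y ⟨lt_of_lt_of_le hσ.1 hy.1, hy.2⟩).hasDerivWithinAt)
        1 ⟨le_of_lt h1, le_refl 1⟩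
  have h2 : Filter.Tendsto h (nhdsWithin 0 (Set.Ioi 0)) (nhds (h 1)) := by
    apply Filter.Tendsto.congr' _ tendsto_const_nhds
    filter_upwards [Ioc_mem_nhdsGT_of_mem (⟨le_refl 0, one_pos⟩ : (0:ℝ) ∈ Set.Ico (0:ℝ) 1)] with σ hσ
    exact hconst σ hσ
  have h3 : Filter.Tendsto h (nhdsWithin 0 (Set.Ioi 0)) (nhds (h 0)) :=
    (hc.tendsto 0).mono_left nhdsWithin_le_nhds
  exact tendsto_nhds_unique h2 h3

set_option maxHeartbeats 2000000 in
/-- Holmgren-type unique continuation from the fixed endpoint for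
the wave equation on the non-cylindrical domain
`Q̂ = {(x,t) : 0 < t < T, 0 < x < 1 + k t}`, with `0 < k < 1` and
`T > (exp(2k(1+k)/(1−k)³) − 1)/k`. Here `φ x t` denotes `φ(x, t)`. -/
theorem holmgren_unique_continuation_moving_boundary
    (k T : ℝ) (hk0 : 0 < k) (hk1 : k < 1) (hT0 : 0 < T)
    (hT : T > (Real.exp (2 * k * (1 + k) / (1 - k) ^ 3) - 1) / k)
    (φ : ℝ → ℝ → ℝ)
    (hreg : ContDiff ℝ 2 (fun p : ℝ × ℝ => φ p.1 p.2))
    (hwave : ∀ x t : ℝ, 0 < t → t < T → 0 < x → x < 1 + k * t →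
      deriv (fun s => deriv (fun s' => φ x s') s) t
        = deriv (fun y => deriv (fun y' => φ y' t) y) x)
    (hdir0 : ∀ t ∈ Set.Icc (0 : ℝ) T, φ 0 t = 0)
    (hdir1 : ∀ t ∈ Set.Icc (0 : ℝ) T, φ (1 + k * t) t = 0)
    (hneu : ∀ t ∈ Set.Ioo (0 : ℝ) T, deriv (fun y => φ y t) 0 = 0) :
    ∀ x t : ℝ, 0 < t → t < T → 0 < x → x < 1 + k * t → φ x t = 0 := by
  have h1k : (0:ℝ) < 1 - k := by linarith
  -- time threshold consequence : 2 < (1-k)*T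
  have hT2 : 2 < (1 - k) * T := by
    have hx0 : (0:ℝ) < 2 * k * (1 + k) / (1 - k) ^ 3 := by positivity
    have he := Real.add_one_lt_exp (ne_of_gt hx0)
    have h1 : (Real.exp (2 * k * (1 + k) / (1 - k) ^ 3) - 1) / k < T := hT
    rw [div_lt_iff₀ hk0] at h1
    have h2 : 2 * k * (1 + k) / (1 - k) ^ 3 < T * k := by linarith
    rw [div_lt_iff₀ (by positivity)] at h2
    nlinarith [mul_pos hT0 h1k, mul_pos hk0 h1k, sq_nonneg (1-k), sq_nonneg k,
      mul_pos (mul_pos hT0 h1k) hk0, mul_pos hk0 (mul_pos hk0 h1k)]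
  have hT1 : 1 < T := by nlinarith
  set Φ : ℝ × ℝ → ℝ := fun p => φ p.1 p.2 with hΦdef
  have hΦ2 : ContDiff ℝ 2 Φ := hreg
  have hΦ1 : ContDiff ℝ 1 Φ := hΦ2.of_le (by norm_num)
  have hΦd : Differentiable ℝ Φ := hΦ1.differentiable one_ne_zero
  set Ψ := fderiv ℝ Φ with hΨdef
  have hΨ1 : ContDiff ℝ 1 Ψ := hΦ2.fderiv_right (by norm_num)
  have hΨd : Differentiable ℝ Ψ := hΨ1.differentiable one_ne_zero
  set S : Set (ℝ × ℝ) := {p | 0 < p.2 ∧ p.2 < T ∧ 0 < p.1 ∧ p.1 < 1 + k * p.2} with hSdef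
  -- directional derivatives
  have hcurve : ∀ (A v : ℝ × ℝ) (σ : ℝ), HasDerivAt (fun s : ℝ => A + s • v) v σ := by
    intro A v σ
    simpa using ((hasDerivAt_id σ).smul_const v).const_add A
  have dirΦ : ∀ (A v : ℝ × ℝ) (σ : ℝ),
      HasDerivAt (fun s : ℝ => Φ (A + s • v)) (Ψ (A + σ • v) v) σ := by
    intro A v σ
    have := (hΦd (A + σ • v)).hasFDerivAt.comp_hasDerivAt σ (hcurve A v σ)
    exact this
  have dirΨ : ∀ (A v w : ℝ × ℝ) (σ : ℝ),
      HasDerivAt (fun s : ℝ => Ψ (A + s • v) w) (fderiv ℝ Ψ (A + σ • v) v w) σ := by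
    intro A v w σ
    have h1 : HasDerivAt (fun s : ℝ => Ψ (A + s • v)) (fderiv ℝ Ψ (A + σ • v) v) σ := by
      have := (hΨd (A + σ • v)).hasFDerivAt.comp_hasDerivAt σ (hcurve A v σ)
      exact this
    simpa using h1.clm_apply (hasDerivAt_const σ w)
  -- bilinear expansion
  have expand1 : ∀ (z : ℝ × ℝ) (a b : ℝ),
      Ψ z (a, b) = a * Ψ z (1, 0) + b * Ψ z (0, 1) := by
    intro z a b
    have h1 : ((a, b) : ℝ × ℝ) = a • ((1:ℝ), (0:ℝ)) + b • ((0:ℝ), (1:ℝ)) := by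
      simp [Prod.ext_iff]
    rw [h1, map_add, map_smul, map_smul]; simp
  have expand2 : ∀ (z : ℝ × ℝ) (a b c d : ℝ),
      fderiv ℝ Ψ z (a, b) (c, d) =
        a * c * fderiv ℝ Ψ z (1, 0) (1, 0) + a * d * fderiv ℝ Ψ z (1, 0) (0, 1)
        + b * c * fderiv ℝ Ψ z (0, 1) (1, 0) + b * d * fderiv ℝ Ψ z (0, 1) (0, 1) := by
    intro z a b c d
    have h1 : ((a, b) : ℝ × ℝ) = a • ((1:ℝ), (0:ℝ)) + b • ((0:ℝ), (1:ℝ)) := by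
      simp [Prod.ext_iff]
    have h2 : ((c, d) : ℝ × ℝ) = c • ((1:ℝ), (0:ℝ)) + d • ((0:ℝ), (1:ℝ)) := by
      simp [Prod.ext_iff]
    have e1 : fderiv ℝ Ψ z (a, b) = a • fderiv ℝ Ψ z (1, 0) + b • fderiv ℝ Ψ z (0, 1) := by
      rw [h1, map_add, map_smul, map_smul]
    rw [e1, ContinuousLinearMap.add_apply, ContinuousLinearMap.smul_apply,
      ContinuousLinearMap.smul_apply, h2]
    simp only [map_add, map_smul, smul_eq_mul]
    ring
  have hsymm : ∀ (z : ℝ × ℝ),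
      fderiv ℝ Ψ z (1, 0) (0, 1) = fderiv ℝ Ψ z (0, 1) (1, 0) :=
    fun z => second_derivative_symmetric (fun y => (hΦd y).hasFDerivAt)
      (hΨd z).hasFDerivAt _ _
  -- handy point computations
  have hptv : ∀ a s : ℝ, ((a, (0:ℝ)) : ℝ × ℝ) + s • ((0:ℝ), (1:ℝ)) = (a, s) := by
    intro a s; simp [Prod.ext_iff]
  have hpth : ∀ b s : ℝ, (((0:ℝ), b) : ℝ × ℝ) + s • ((1:ℝ), (0:ℝ)) = (s, b) := by
    intro b s; simp [Prod.ext_iff]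
  -- basic 1D derivatives
  have hvert : ∀ a b : ℝ, HasDerivAt (fun s : ℝ => φ a s) (Ψ (a, b) (0, 1)) b := by
    intro a b
    have h := dirΦ (a, 0) (0, 1) b
    simp only [hptv] at h
    exact h
  have hhoriz : ∀ a b : ℝ, HasDerivAt (fun y : ℝ => φ y b) (Ψ (a, b) (1, 0)) a := by
    intro a b
    have h := dirΦ (0, b) (1, 0) a
    simp only [hpth] at h
    exact h
  -- wave equation in fderiv form
  have hwave' : ∀ y ∈ S, fderiv ℝ Ψ y ((0:ℝ), (1:ℝ)) (0, 1) = fderiv ℝ Ψ y ((1:ℝ), (0:ℝ)) (1, 0) := by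
    rintro ⟨a, b⟩ hy
    obtain ⟨hb0, hbT, ha0, ha1⟩ := hy
    have e1 : (fun s : ℝ => deriv (fun s' => φ a s') s) = fun s => Ψ (a, s) (0, 1) := by
      funext s; exact (hvert a s).deriv
    have e2 : (fun y : ℝ => deriv (fun y' => φ y' b) y) = fun y => Ψ (y, b) (1, 0) := by
      funext y; exact (hhoriz y b).deriv
    have d1 : deriv (fun s => deriv (fun s' => φ a s') s) b
        = fderiv ℝ Ψ (a, b) ((0:ℝ), (1:ℝ)) (0, 1) := by
      rw [e1]
      have h := dirΨ (a, 0) (0, 1) (0, 1) b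
      simp only [hptv] at h
      exact h.deriv
    have d2 : deriv (fun y => deriv (fun y' => φ y' b) y) a
        = fderiv ℝ Ψ (a, b) ((1:ℝ), (0:ℝ)) (1, 0) := by
      rw [e2]
      have h := dirΨ (0, b) (1, 0) (1, 0) a
      simp only [hpth] at h
      exact h.deriv
    rw [← d1, ← d2]
    exact hwave a b hb0 hbT ha0 ha1
  -- the two characteristic-direction second derivatives vanish on S
  have hdirzero : ∀ y ∈ S, ∀ c : ℝ,
      fderiv ℝ Ψ y (c, c) ((-1:ℝ), (1:ℝ)) = 0 ∧ fderiv ℝ Ψ y (-c, c) ((1:ℝ), (1:ℝ)) = 0 := by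
    intro y hy c
    have hw := hwave' y hy
    have hs := hsymm y
    constructor
    · rw [expand2 y c c (-1) 1]; linear_combination c * hw + c * hs
    · rw [expand2 y (-c) c 1 1]; linear_combination c * hw - c * hs
  -- boundary facts
  have hD0t : ∀ b ∈ Ioo (0:ℝ) T, Ψ (0, b) (0, 1) = 0 := by
    intro b hb
    have hev : (fun s : ℝ => φ 0 s) =ᶠ[nhds b] fun _ => (0:ℝ) := by
      filter_upwards [Ioo_mem_nhds hb.1 hb.2] with s hs
      exact hdir0 s ⟨le_of_lt hs.1, le_of_lt hs.2⟩
    have h0 : HasDerivAt (fun s : ℝ => φ 0 s) 0 b :=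
      (hasDerivAt_const b (0:ℝ)).congr_of_eventuallyEq hev
    exact (hvert 0 b).unique h0
  have hN : ∀ b ∈ Ioo (0:ℝ) T, Ψ (0, b) (1, 0) = 0 := by
    intro b hb
    rw [← (hhoriz 0 b).deriv]
    exact hneu b hb
  have hMB : ∀ b ∈ Ioo (0:ℝ) T, Ψ (1 + k * b, b) ((k:ℝ), (1:ℝ)) = 0 := by
    intro b hb
    have hpt : ∀ s : ℝ, (((1:ℝ), (0:ℝ)) : ℝ × ℝ) + s • ((k:ℝ), (1:ℝ)) = (1 + k * s, s) := by
      intro s; simp [Prod.ext_iff]; ring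
    have hder : HasDerivAt (fun s : ℝ => φ (1 + k * s) s) (Ψ (1 + k * b, b) ((k:ℝ), (1:ℝ))) b := by
      have h := dirΦ (1, 0) (k, 1) b
      simp only [hpt] at h
      exact h
    have hev : (fun s : ℝ => φ (1 + k * s) s) =ᶠ[nhds b] fun _ => (0:ℝ) := by
      filter_upwards [Ioo_mem_nhds hb.1 hb.2] with s hs
      exact hdir1 s ⟨le_of_lt hs.1, le_of_lt hs.2⟩
    have h0 : HasDerivAt (fun s : ℝ => φ (1 + k * s) s) 0 b :=
      (hasDerivAt_const b (0:ℝ)).congr_of_eventuallyEq hev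
    exact hder.unique h0
  have hP0 : ∀ b ∈ Ioo (0:ℝ) T, Ψ (0, b) ((1:ℝ), (1:ℝ)) = 0 := by
    intro b hb
    rw [expand1, hD0t b hb, hN b hb]; ring
  have hQ0 : ∀ b ∈ Ioo (0:ℝ) T, Ψ (0, b) ((-1:ℝ), (1:ℝ)) = 0 := by
    intro b hb
    rw [expand1, hD0t b hb, hN b hb]; ring
  have hPQmb : ∀ b ∈ Ioo (0:ℝ) T,
      (1 + k) * Ψ (1 + k * b, b) ((1:ℝ), (1:ℝ)) + (1 - k) * Ψ (1 + k * b, b) ((-1:ℝ), (1:ℝ)) = 0 := by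
    intro b hb
    have h1 := hMB b hb
    rw [expand1 _ k 1] at h1
    rw [expand1 _ 1 1, expand1 _ (-1) 1]
    linear_combination 2 * h1
  -- constancy of Ψ · w along segments inside S
  have segΨ : ∀ (z₁ z₂ w : ℝ × ℝ), (∀ σ ∈ Ioo (0:ℝ) 1, z₁ + σ • (z₂ - z₁) ∈ S) →
      (∀ y ∈ S, fderiv ℝ Ψ y (z₂ - z₁) w = 0) → Ψ z₂ w = Ψ z₁ w := by
    intro z₁ z₂ w hmem hzero
    have hc : Continuous fun σ : ℝ => Ψ (z₁ + σ • (z₂ - z₁)) w := by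
      apply continuous_iff_continuousAt.mpr
      intro σ
      exact (dirΨ z₁ (z₂ - z₁) w σ).continuousAt
    have hd : ∀ σ ∈ Ioo (0:ℝ) 1, HasDerivAt (fun σ : ℝ => Ψ (z₁ + σ • (z₂ - z₁)) w) 0 σ := by
      intro σ hσ
      have h := dirΨ z₁ (z₂ - z₁) w σ
      rwa [hzero _ (hmem σ hσ)] at h
    have := eq01' hc hd
    simpa using this
  -- Q := Ψ·(-1,1) vanishes at every interior point
  have hQall : ∀ a b : ℝ, 0 < b → b < T → 0 < a → a < 1 + k * b →
      Ψ (a, b) ((-1:ℝ), (1:ℝ)) = 0 := by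
    intro a b hb0 hbT ha0 ha1
    rcases lt_or_ge 0 (b - a) with hs | hs
    · -- the backward characteristic reaches x = 0 at time b - a ∈ (0,T)
      have hdir : ((a, b) : ℝ × ℝ) - (0, b - a) = (a, a) := by
        simp [Prod.ext_iff]
      have h := segΨ (0, b - a) (a, b) (-1, 1) ?_ ?_
      · rw [h]; exact hQ0 (b - a) ⟨hs, by linarith⟩
      · intro σ hσ
        obtain ⟨hσ0, hσ1⟩ := hσ
        simp only [hSdef, hdir, mem_setOf_eq, Prod.smul_mk, Prod.mk_add_mk, smul_eq_mul]
        refine ⟨by nlinarith [mul_pos hσ0 ha0], by nlinarith [mul_pos (sub_pos.mpr hσ1) ha0],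
          by nlinarith [mul_pos hσ0 ha0],
          by nlinarith [mul_pos (sub_pos.mpr hσ1) (mul_pos ha0 h1k), mul_pos hσ0 (mul_pos hk0 ha0)]⟩
      · intro y hy; rw [hdir]; exact (hdirzero y hy a).1
    · -- reflect once off the moving boundary
      set tB := (1 + (b - a)) / (1 - k) with htBdef
      have htBk : (1 - k) * tB = 1 + (b - a) := by
        rw [htBdef]; field_simp
      have hs1 : -1 < b - a := by nlinarith
      have htB0 : 0 < tB := by nlinarith
      have htBT : tB < T := by nlinarith
      have hxB0 : 0 < 1 + k * tB := by positivity
      have huB0 : 0 < 1 + (1 + k) * tB := by positivity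
      have huBT : 1 + (1 + k) * tB < T := by nlinarith
      -- step a : P vanishes at the reflection point B = (1+k tB, tB)
      have hPB : Ψ (1 + k * tB, tB) ((1:ℝ), (1:ℝ)) = 0 := by
        have hdir : ((1 + k * tB, tB) : ℝ × ℝ) - (0, 1 + (1 + k) * tB)
            = (-(-(1 + k * tB)), -(1 + k * tB)) := by
          simp [Prod.ext_iff]; ring
        have h := segΨ (0, 1 + (1 + k) * tB) (1 + k * tB, tB) (1, 1) ?_ ?_
        · rw [h]; exact hP0 _ ⟨huB0, huBT⟩
        · intro σ hσ
          obtain ⟨hσ0, hσ1⟩ := hσ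
          simp only [hSdef, mem_setOf_eq, Prod.mk_sub_mk, Prod.smul_mk, Prod.mk_add_mk, smul_eq_mul]
          refine ⟨by nlinarith [mul_pos (sub_pos.mpr hσ1) hxB0],
            by nlinarith [mul_pos hσ0 hxB0],
            by nlinarith [mul_pos hσ0 hxB0],
            by nlinarith [mul_pos (sub_pos.mpr hσ1) (mul_pos hxB0 (by linarith : (0:ℝ) < 1 + k))]⟩
        · intro y hy; rw [hdir]; exact (hdirzero y hy (-(1 + k * tB))).2
      -- step b : hence Q vanishes at B
      have hQB : Ψ (1 + k * tB, tB) ((-1:ℝ), (1:ℝ)) = 0 := by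
        have h := hPQmb tB ⟨htB0, htBT⟩
        rw [hPB] at h
        have h2 : (1 - k) * Ψ (1 + k * tB, tB) ((-1:ℝ), (1:ℝ)) = 0 := by linarith
        rcases mul_eq_zero.mp h2 with h3 | h3
        · linarith
        · exact h3
      -- step c : propagate Q from B back to (a,b)
      have hc : a - (1 + k * tB) < 0 := by nlinarith
      have hdir : ((a, b) : ℝ × ℝ) - (1 + k * tB, tB)
          = (a - (1 + k * tB), a - (1 + k * tB)) := by
        have h2 : b - tB = a - (1 + k * tB) := by linarith [htBk]
        simp only [Prod.mk_sub_mk, h2]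
      have h := segΨ (1 + k * tB, tB) (a, b) (-1, 1) ?_ ?_
      · rw [h]; exact hQB
      · intro σ hσ
        obtain ⟨hσ0, hσ1⟩ := hσ
        simp only [hSdef, hdir, mem_setOf_eq, Prod.smul_mk, Prod.mk_add_mk, smul_eq_mul]
        have hb2 : b - tB = a - (1 + k * tB) := by linarith [htBk]
        refine ⟨by nlinarith [mul_neg_of_pos_of_neg (sub_pos.mpr hσ1) hc],
          by nlinarith [mul_neg_of_pos_of_neg hσ0 hc],
          by nlinarith [mul_neg_of_pos_of_neg (sub_pos.mpr hσ1) hc],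
          by nlinarith [mul_neg_of_pos_of_neg (mul_pos hσ0 h1k) hc]⟩
      · intro y hy; rw [hdir]; exact (hdirzero y hy (a - (1 + k * tB))).1
  -- P := Ψ·(1,1) vanishes at every interior point
  have hPall : ∀ a b : ℝ, 0 < b → b < T → 0 < a → a < 1 + k * b →
      Ψ (a, b) ((1:ℝ), (1:ℝ)) = 0 := by
    intro a b hb0 hbT ha0 ha1
    rcases lt_or_ge (a + b) T with hu | hu
    · -- the forward characteristic comes from x = 0 at time a + b ∈ (0,T)
      have hdir : ((a, b) : ℝ × ℝ) - (0, a + b) = (-(-a), -a) := by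
        simp [Prod.ext_iff]
      have h := segΨ (0, a + b) (a, b) (1, 1) ?_ ?_
      · rw [h]; exact hP0 (a + b) ⟨by linarith, hu⟩
      · intro σ hσ
        obtain ⟨hσ0, hσ1⟩ := hσ
        simp only [hSdef, hdir, mem_setOf_eq, Prod.smul_mk, Prod.mk_add_mk, smul_eq_mul]
        refine ⟨by nlinarith [mul_pos (sub_pos.mpr hσ1) ha0], by nlinarith [mul_pos hσ0 ha0],
          by nlinarith [mul_pos hσ0 ha0],
          by nlinarith [mul_pos (sub_pos.mpr hσ1) (mul_pos ha0 (by linarith : (0:ℝ) < 1 + k))]⟩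
      · intro y hy; rw [hdir]; exact (hdirzero y hy (-a)).2
    · -- the forward characteristic comes from the moving boundary
      set tP := (a + b - 1) / (1 + k) with htPdef
      have htPk : (1 + k) * tP = a + b - 1 := by
        rw [htPdef]; field_simp
      have htP0 : 0 < tP := by nlinarith
      have htPT : tP < T := by nlinarith
      have hxP0 : 0 < 1 + k * tP := by positivity
      have hsP0 : 0 < (1 - k) * tP - 1 := by nlinarith
      have hsPT : (1 - k) * tP - 1 < T := by nlinarith
      -- step a : Q vanishes at the reflection point B' = (1+k tP, tP)
      have hQB : Ψ (1 + k * tP, tP) ((-1:ℝ), (1:ℝ)) = 0 := by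
        have hdir : ((1 + k * tP, tP) : ℝ × ℝ) - (0, (1 - k) * tP - 1)
            = (1 + k * tP, 1 + k * tP) := by
          simp only [Prod.mk_sub_mk, sub_zero]
          have h2 : tP - ((1 - k) * tP - 1) = 1 + k * tP := by ring
          rw [h2]
        have h := segΨ (0, (1 - k) * tP - 1) (1 + k * tP, tP) (-1, 1) ?_ ?_
        · rw [h]; exact hQ0 _ ⟨hsP0, hsPT⟩
        · intro σ hσ
          obtain ⟨hσ0, hσ1⟩ := hσ
          simp only [hSdef, hdir, mem_setOf_eq, Prod.smul_mk, Prod.mk_add_mk, smul_eq_mul]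
          refine ⟨by nlinarith [mul_pos hσ0 hxP0], by nlinarith [mul_pos (sub_pos.mpr hσ1) hxP0],
            by nlinarith [mul_pos hσ0 hxP0],
            by nlinarith [mul_pos (sub_pos.mpr hσ1) (mul_pos hxP0 h1k), mul_pos hσ0 (mul_pos hk0 hxP0)]⟩
        · intro y hy; rw [hdir]; exact (hdirzero y hy (1 + k * tP)).1
      -- step b : hence P vanishes at B'
      have hPB : Ψ (1 + k * tP, tP) ((1:ℝ), (1:ℝ)) = 0 := by
        have h := hPQmb tP ⟨htP0, htPT⟩
        rw [hQB] at h
        have h2 : (1 + k) * Ψ (1 + k * tP, tP) ((1:ℝ), (1:ℝ)) = 0 := by linarith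
        rcases mul_eq_zero.mp h2 with h3 | h3
        · linarith
        · exact h3
      -- step c : propagate P from B' back to (a,b)
      have hc : a - (1 + k * tP) < 0 := by nlinarith
      have hdir : ((a, b) : ℝ × ℝ) - (1 + k * tP, tP)
          = (-(-(a - (1 + k * tP))), -(a - (1 + k * tP))) := by
        have h2 : b - tP = -(a - (1 + k * tP)) := by linarith [htPk]
        simp only [Prod.mk_sub_mk, h2]
        norm_num
      have h := segΨ (1 + k * tP, tP) (a, b) (1, 1) ?_ ?_
      · rw [h]; exact hPB
      · intro σ hσ
        obtain ⟨hσ0, hσ1⟩ := hσ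
        simp only [hSdef, hdir, mem_setOf_eq, Prod.smul_mk, Prod.mk_add_mk, smul_eq_mul]
        have hb2 : b - tP = -(a - (1 + k * tP)) := by linarith [htPk]
        refine ⟨by nlinarith [mul_neg_of_pos_of_neg hσ0 hc],
          by nlinarith [mul_neg_of_pos_of_neg (sub_pos.mpr hσ1) hc],
          by nlinarith [mul_neg_of_pos_of_neg (sub_pos.mpr hσ1) hc],
          by nlinarith [mul_neg_of_pos_of_neg (mul_pos hσ0 (by linarith : (0:ℝ) < 1 + k)) hc]⟩
      · intro y hy; rw [hdir]; exact (hdirzero y hy (-(a - (1 + k * tP)))).2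
  -- hence the spatial derivative vanishes at every interior point
  have hH1 : ∀ a b : ℝ, 0 < b → b < T → 0 < a → a < 1 + k * b →
      Ψ (a, b) ((1:ℝ), (0:ℝ)) = 0 := by
    intro a b hb0 hbT ha0 ha1
    have hP := hPall a b hb0 hbT ha0 ha1
    have hQ := hQall a b hb0 hbT ha0 ha1
    rw [expand1 _ 1 1] at hP
    rw [expand1 _ (-1) 1] at hQ
    linarith
  -- conclude by integrating from the fixed boundary
  intro x t ht0 htT hx0 hx1
  have hpt2 : ∀ s : ℝ, (((0:ℝ), t) : ℝ × ℝ) + s • ((x:ℝ), (0:ℝ)) = (s * x, t) := by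
    intro s; simp [Prod.ext_iff]
  have hcont : Continuous fun σ : ℝ => Φ (σ * x, t) :=
    hΦ1.continuous.comp ((continuous_id.mul continuous_const).prodMk continuous_const)
  have hd : ∀ σ ∈ Ioo (0:ℝ) 1, HasDerivAt (fun σ : ℝ => Φ (σ * x, t)) 0 σ := by
    intro σ hσ
    obtain ⟨hσ0, hσ1⟩ := hσ
    have h := dirΦ (0, t) (x, 0) σ
    simp only [hpt2] at h
    have hmem1 : σ * x < 1 + k * t := by nlinarith [mul_pos (sub_pos.mpr hσ1) hx0]
    have hval : Ψ (σ * x, t) ((x:ℝ), (0:ℝ)) = 0 := by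
      rw [expand1 _ x 0, hH1 (σ * x) t ht0 htT (mul_pos hσ0 hx0) hmem1]
      ring
    rwa [hval] at h
  have h := eq01' hcont hd
  simp only [one_mul, zero_mul] at h
  have h0 : Φ ((0:ℝ), t) = 0 := hdir0 t ⟨le_of_lt ht0, le_of_lt htT⟩
  calc φ x t = Φ (x, t) := rfl
    _ = Φ (0, t) := h
    _ = 0 := h0
end

section
/- Fix 0 < k < 1 and T > 0, let α_k(t) = 1 + k t, and let Q̂ = {(x,t) ∈ ℝ² : 0 < t < T, 0 < x < α_k(t)}. Let u : ℝ² → ℝ be of class C². If u satisfies ∂²u/∂t² (x,t) = ∂²u/∂x² (x,t) for all (x,t) ∈ Q̂, the boundary conditions u(0,t) = 0 and u(α_k(t), t) = 0 for all t ∈ [0,T], and the zero initial conditions u(x,0) = 0 and ∂u/∂t (x,0) = 0 for all x ∈ [0,1], then u(x,t) = 0 for all (x,t) ∈ Q̂. -/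
open Set MeasureTheory intervalIntegral

-- integral of a function vanishing on the open interval
lemma integral_zero_of_zero_on_Ioo' {f : ℝ → ℝ} {b : ℝ} (hb : 0 ≤ b)
    (h : ∀ y ∈ Set.Ioo (0:ℝ) b, f y = 0) : ∫ y in (0:ℝ)..b, f y = 0 := by
  rw [intervalIntegral.integral_of_le hb, MeasureTheory.integral_Ioc_eq_integral_Ioo,
    MeasureTheory.setIntegral_congr_fun measurableSet_Ioo h]
  simp

/-- uniqueness (for classical solutions) of the homogeneous Dirichlet
initial-boundary value problem for the wave equation on the moving domain
`Q̂ = {(x,t) : 0 < t < T, 0 < x < 1 + k t}`, with `0 < k < 1`.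
Here `u x t` denotes `u(x, t)`. -/
theorem wave_moving_boundary_zero_data_implies_zero
    (k T : ℝ) (hk0 : 0 < k) (hk1 : k < 1) (hT0 : 0 < T)
    (u : ℝ → ℝ → ℝ)
    (hreg : ContDiff ℝ 2 (fun p : ℝ × ℝ => u p.1 p.2))
    (hwave : ∀ x t : ℝ, 0 < t → t < T → 0 < x → x < 1 + k * t →
      deriv (fun s => deriv (fun s' => u x s') s) t
        = deriv (fun y => deriv (fun y' => u y' t) y) x)
    (hdir0 : ∀ t ∈ Set.Icc (0 : ℝ) T, u 0 t = 0)
    (hdir1 : ∀ t ∈ Set.Icc (0 : ℝ) T, u (1 + k * t) t = 0)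
    (hinit0 : ∀ x ∈ Set.Icc (0 : ℝ) 1, u x 0 = 0)
    (hinit1 : ∀ x ∈ Set.Icc (0 : ℝ) 1, deriv (fun s => u x s) 0 = 0) :
    ∀ x t : ℝ, 0 < t → t < T → 0 < x → x < 1 + k * t → u x t = 0 := by
  have hFd : Differentiable ℝ (fun p : ℝ × ℝ => u p.1 p.2) :=
    hreg.differentiable (by norm_num)
  set F : ℝ × ℝ → ℝ := fun p => u p.1 p.2 with hF
  set P : ℝ × ℝ → ℝ := fun p => fderiv ℝ F p (1,0) with hPdef
  set Q : ℝ × ℝ → ℝ := fun p => fderiv ℝ F p (0,1) with hQdef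
  have hfd1 : ContDiff ℝ 1 (fderiv ℝ F) := hreg.fderiv_right (by norm_num)
  have hPc : ContDiff ℝ 1 P := hfd1.clm_apply contDiff_const
  have hQc : ContDiff ℝ 1 Q := hfd1.clm_apply contDiff_const
  have hPd : Differentiable ℝ P := hPc.differentiable one_ne_zero
  have hQd : Differentiable ℝ Q := hQc.differentiable one_ne_zero
  have lineF : ∀ (g : ℝ×ℝ→ℝ), Differentiable ℝ g → ∀ (γ : ℝ → ℝ×ℝ) (γ' : ℝ×ℝ) (s : ℝ),
      HasDerivAt γ γ' s → HasDerivAt (fun s => g (γ s)) (fderiv ℝ g (γ s) γ') s :=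
    fun g hg γ γ' s hγ => (hg (γ s)).hasFDerivAt.comp_hasDerivAt s hγ
  have hPof : ∀ x t : ℝ, HasDerivAt (fun y => u y t) (P (x,t)) x := fun x t =>
    lineF F hFd _ _ x ((hasDerivAt_id x).prodMk (hasDerivAt_const x t))
  have hQof : ∀ x t : ℝ, HasDerivAt (fun s => u x s) (Q (x,t)) t := fun x t =>
    lineF F hFd _ _ t ((hasDerivAt_const t x).prodMk (hasDerivAt_id t))
  have hPfd : ∀ (p : ℝ×ℝ) (w : ℝ×ℝ), fderiv ℝ P p w = fderiv ℝ (fderiv ℝ F) p w (1,0) := by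
    intro p w
    have h1 : HasFDerivAt (fderiv ℝ F) (fderiv ℝ (fderiv ℝ F) p) p :=
      ((hfd1.differentiable one_ne_zero) p).hasFDerivAt
    have h2 := h1.clm_apply (hasFDerivAt_const ((1:ℝ),(0:ℝ)) p)
    rw [h2.fderiv]
    simp
  have hQfd : ∀ (p : ℝ×ℝ) (w : ℝ×ℝ), fderiv ℝ Q p w = fderiv ℝ (fderiv ℝ F) p w (0,1) := by
    intro p w
    have h1 : HasFDerivAt (fderiv ℝ F) (fderiv ℝ (fderiv ℝ F) p) p :=
      ((hfd1.differentiable one_ne_zero) p).hasFDerivAt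
    have h2 := h1.clm_apply (hasFDerivAt_const ((0:ℝ),(1:ℝ)) p)
    rw [h2.fderiv]
    simp
  have hsymm : ∀ p : ℝ×ℝ, fderiv ℝ P p (0,1) = fderiv ℝ Q p (1,0) := by
    intro p
    rw [hPfd, hQfd]
    exact second_derivative_symmetric (fun y => (hFd y).hasFDerivAt)
      ((hfd1.differentiable one_ne_zero p).hasFDerivAt) _ _
  -- continuity of directional derivatives of P and Q
  have contApp : ∀ (g : ℝ×ℝ→ℝ), ContDiff ℝ 1 g → ∀ v : ℝ×ℝ,
      Continuous (fun p : ℝ×ℝ => fderiv ℝ g p v) := by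
    intro g hg v
    exact isBoundedBilinearMap_apply.continuous.comp
      ((hg.continuous_fderiv one_ne_zero).prodMk continuous_const)
  -- wave equation in terms of P, Q, on the closed-in-x region
  have hwave' : ∀ t ∈ Ioo (0:ℝ) T, ∀ x ∈ Icc (0:ℝ) (1 + k*t),
      fderiv ℝ Q (x,t) (0,1) = fderiv ℝ P (x,t) (1,0) := by
    intro t ht
    have hopen : ∀ x ∈ Ioo (0:ℝ) (1 + k*t),
        fderiv ℝ Q (x,t) (0,1) = fderiv ℝ P (x,t) (1,0) := by
      intro x hx
      have h := hwave x t ht.1 ht.2 hx.1 hx.2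
      have e1 : (fun s => deriv (fun s' => u x s') s) = fun s => Q (x, s) := by
        funext s; exact (hQof x s).deriv
      have e2 : (fun y => deriv (fun y' => u y' t) y) = fun y => P (y, t) := by
        funext y; exact (hPof y t).deriv
      rw [e1, e2] at h
      have d1 : deriv (fun s => Q (x, s)) t = fderiv ℝ Q (x,t) (0,1) :=
        (lineF Q hQd _ _ t ((hasDerivAt_const t x).prodMk (hasDerivAt_id t))).deriv
      have d2 : deriv (fun y => P (y, t)) x = fderiv ℝ P (x,t) (1,0) :=
        (lineF P hPd _ _ x ((hasDerivAt_id x).prodMk (hasDerivAt_const x t))).deriv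
      rw [d1, d2] at h
      exact h
    have hclos : Icc (0:ℝ) (1 + k*t) ⊆ closure (Ioo (0:ℝ) (1 + k*t)) := by
      rw [closure_Ioo (by nlinarith [mul_pos hk0 ht.1] : (0:ℝ) ≠ 1 + k*t)]
    intro x hx
    have : EqOn (fun x => fderiv ℝ Q (x,t) (0,1)) (fun x => fderiv ℝ P (x,t) (1,0))
        (closure (Ioo (0:ℝ) (1 + k*t))) := by
      apply Set.EqOn.closure hopen
      · exact (contApp Q hQc (0,1)).comp (continuous_id.prodMk continuous_const)
      · exact (contApp P hPc (1,0)).comp (continuous_id.prodMk continuous_const)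
    exact this (hclos hx)
  -- boundary conditions
  have hQ0 : ∀ t ∈ Ioo (0:ℝ) T, Q (0, t) = 0 := by
    intro t ht
    have hev : (fun _ : ℝ => (0:ℝ)) =ᶠ[nhds t] fun s => u 0 s :=
      Filter.eventuallyEq_of_mem (Ioo_mem_nhds ht.1 ht.2)
        (fun s hs => (hdir0 s ⟨le_of_lt hs.1, le_of_lt hs.2⟩).symm)
    have := (hQof 0 t).congr_of_eventuallyEq hev
    exact this.unique (hasDerivAt_const t 0)
  -- linearity decomposition for continuous linear maps on ℝ²
  have Llin : ∀ (L : ℝ×ℝ →L[ℝ] ℝ) (α β : ℝ), L (α, β) = α * L (1,0) + β * L (0,1) := by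
    intro L α β
    have hv : ((α, β) : ℝ×ℝ) = α • ((1:ℝ),(0:ℝ)) + β • ((0:ℝ),(1:ℝ)) := by
      simp [Prod.ext_iff]
    rw [hv, map_add, L.map_smul, L.map_smul, smul_eq_mul, smul_eq_mul]
  have hQa : ∀ t ∈ Ioo (0:ℝ) T, Q (1 + k*t, t) = -(k * P (1 + k*t, t)) := by
    intro t ht
    have hγ : HasDerivAt (fun s : ℝ => ((1 + k*s, s) : ℝ×ℝ)) (k, 1) t := by
      apply HasDerivAt.prodMk
      · simpa using ((hasDerivAt_id t).const_mul k).const_add 1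
      · exact hasDerivAt_id t
    have hD := lineF F hFd _ _ t hγ
    have hev : (fun _ : ℝ => (0:ℝ)) =ᶠ[nhds t] fun s => u (1 + k*s) s :=
      Filter.eventuallyEq_of_mem (Ioo_mem_nhds ht.1 ht.2)
        (fun s hs => (hdir1 s ⟨le_of_lt hs.1, le_of_lt hs.2⟩).symm)
    have h0 := (hD.congr_of_eventuallyEq hev).unique (hasDerivAt_const t 0)
    have hlin : fderiv ℝ F (1 + k*t, t) (k, 1) = k * P (1 + k*t, t) + Q (1 + k*t, t) := by
      simpa using Llin (fderiv ℝ F (1 + k*t, t)) k 1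
    rw [hlin] at h0
    linarith
  have hPinit : ∀ y ∈ Ioo (0:ℝ) 1, P (y, 0) = 0 := by
    intro y hy
    have hev : (fun _ : ℝ => (0:ℝ)) =ᶠ[nhds y] fun x => u x 0 :=
      Filter.eventuallyEq_of_mem (Ioo_mem_nhds hy.1 hy.2)
        (fun x hx => (hinit0 x ⟨le_of_lt hx.1, le_of_lt hx.2⟩).symm)
    exact ((hPof y 0).congr_of_eventuallyEq hev).unique (hasDerivAt_const y 0)
  have hQinit : ∀ y ∈ Icc (0:ℝ) 1, Q (y, 0) = 0 := by
    intro y hy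
    rw [← (hQof y 0).deriv]
    exact hinit1 y hy
  -- energy density and energy
  set e : ℝ×ℝ → ℝ := fun p => P p * P p + Q p * Q p with hedef
  have hecont : Continuous e :=
    (hPc.continuous.mul hPc.continuous).add (hQc.continuous.mul hQc.continuous)
  set G : ℝ → ℝ → ℝ := fun t y => (1 + k*t) * e ((1 + k*t)*y, t) with hGdef
  set ed : ℝ → ℝ → ℝ := fun t y => k * e ((1+k*t)*y, t) + (1+k*t) *
      (2 * P ((1+k*t)*y, t) * fderiv ℝ P ((1+k*t)*y, t) (k*y, 1)
     + 2 * Q ((1+k*t)*y, t) * fderiv ℝ Q ((1+k*t)*y, t) (k*y, 1)) with heddef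
  set E : ℝ → ℝ := fun t => ∫ y in (0:ℝ)..1, G t y with hEdef
  have ha : ∀ t : ℝ, HasDerivAt (fun t : ℝ => 1 + k*t) k t := by
    intro t
    simpa using ((hasDerivAt_id t).const_mul k).const_add 1
  have hGd : ∀ t y : ℝ, HasDerivAt (fun t => G t y) (ed t y) t := by
    intro t y
    have hc : HasDerivAt (fun t : ℝ => ((((1+k*t)*y, t)) : ℝ×ℝ)) (k*y, 1) t :=
      ((ha t).mul_const y).prodMk (hasDerivAt_id t)
    have hP' := lineF P hPd _ _ t hc
    have hQ' := lineF Q hQd _ _ t hc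
    have he' := (hP'.mul hP').add (hQ'.mul hQ')
    have := (ha t).mul he'
    refine this.congr_deriv ?_
    simp only [heddef, hGdef, hedef, Pi.add_apply, Pi.mul_apply]
    ring
  have hccont : Continuous (fun q : ℝ×ℝ => ((((1 + k*q.1)*q.2, q.1)) : ℝ×ℝ)) := by fun_prop
  have hfPapp : Continuous (fun q : ℝ×ℝ => fderiv ℝ P ((1+k*q.1)*q.2, q.1) (k*q.2, 1)) :=
    isBoundedBilinearMap_apply.continuous.comp
      (((hPc.continuous_fderiv one_ne_zero).comp hccont).prodMk (by fun_prop))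
  have hfQapp : Continuous (fun q : ℝ×ℝ => fderiv ℝ Q ((1+k*q.1)*q.2, q.1) (k*q.2, 1)) :=
    isBoundedBilinearMap_apply.continuous.comp
      (((hQc.continuous_fderiv one_ne_zero).comp hccont).prodMk (by fun_prop))
  have hedcont : Continuous (fun q : ℝ×ℝ => ed q.1 q.2) := by
    refine Continuous.add (continuous_const.mul (hecont.comp hccont)) ?_
    exact (by fun_prop : Continuous (fun q : ℝ×ℝ => 1 + k*q.1)).mul
      (((continuous_const.mul (hPc.continuous.comp hccont)).mul hfPapp).add
       ((continuous_const.mul (hQc.continuous.comp hccont)).mul hfQapp))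
  have hGcont : ∀ t : ℝ, Continuous (G t) := by
    intro t
    exact continuous_const.mul (hecont.comp (by fun_prop))
  have hedcont1 : ∀ t : ℝ, Continuous (ed t) :=
    fun t => hedcont.comp (continuous_const.prodMk continuous_id)
  have hE : ∀ t₀ : ℝ, HasDerivAt E (∫ y in (0:ℝ)..1, ed t₀ y) t₀ := by
    intro t₀
    obtain ⟨C, hC⟩ := (isCompact_Icc.prod isCompact_Icc :
        IsCompact ((Icc (t₀-1) (t₀+1)) ×ˢ (Icc (0:ℝ) 1))).exists_bound_of_continuousOn
      hedcont.continuousOn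
    refine (intervalIntegral.hasDerivAt_integral_of_dominated_loc_of_deriv_le
      (F := G) (F' := ed) (x₀ := t₀) (a := 0) (b := 1) (bound := fun _ => C) (s := Metric.ball t₀ 1)
      (Metric.ball_mem_nhds t₀ one_pos) ?_ ?_ ?_ ?_ ?_ ?_).2
    · exact Filter.Eventually.of_forall fun x => ((hGcont x).aestronglyMeasurable)
    · exact (hGcont t₀).intervalIntegrable 0 1
    · exact (hedcont1 t₀).aestronglyMeasurable
    · refine Filter.Eventually.of_forall fun y hy x hx => ?_
      rw [Set.uIoc_of_le (by norm_num : (0:ℝ) ≤ 1)] at hy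
      rw [Metric.mem_ball, Real.dist_eq, abs_sub_lt_iff] at hx
      exact hC (x, y) ⟨⟨by linarith [hx.1, hx.2], by linarith [hx.1, hx.2]⟩,
        ⟨hy.1.le, hy.2⟩⟩
    · exact intervalIntegrable_const
    · exact Filter.Eventually.of_forall fun y _ x _ => hGd x y
  have hEval : ∀ t ∈ Ioo (0:ℝ) T, (∫ y in (0:ℝ)..1, ed t y)
      = k * (k^2 - 1) * (P (1+k*t, t))^2 := by
    intro t ht
    have hA0 : 0 < 1 + k*t := by nlinarith [mul_pos hk0 ht.1]
    set Φ : ℝ → ℝ := fun y => k*y*e ((1+k*t)*y, t)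
      + 2 * (P ((1+k*t)*y, t) * Q ((1+k*t)*y, t)) with hPhidef
    have hΦd : ∀ y ∈ uIcc (0:ℝ) 1, HasDerivAt Φ (ed t y) y := by
      intro y hy
      rw [Set.uIcc_of_le (by norm_num : (0:ℝ) ≤ 1)] at hy
      have hc2 : HasDerivAt (fun y : ℝ => (((1+k*t)*y, t) : ℝ×ℝ)) (1+k*t, 0) y := by
        apply HasDerivAt.prodMk
        · simpa using (hasDerivAt_id y).const_mul (1+k*t)
        · exact hasDerivAt_const y t
      have hP2 := lineF P hPd _ _ y hc2
      have hQ2 := lineF Q hQd _ _ y hc2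
      have he2 := (hP2.mul hP2).add (hQ2.mul hQ2)
      have hky : HasDerivAt (fun y : ℝ => k*y) k y := by
        simpa using (hasDerivAt_id y).const_mul k
      have hD := (hky.mul he2).add ((hP2.mul hQ2).const_mul 2)
      have hx : (1+k*t)*y ∈ Icc (0:ℝ) (1 + k*t) :=
        ⟨mul_nonneg hA0.le hy.1, by nlinarith [hy.2, hy.1]⟩
      have hw := hwave' t ht ((1+k*t)*y) hx
      have hs := hsymm ((1+k*t)*y, t)
      refine hD.congr_deriv ?_
      rw [heddef]
      simp only [Pi.add_apply, Pi.mul_apply]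
      rw [Llin (fderiv ℝ P ((1+k*t)*y,t)) (k*y) 1, Llin (fderiv ℝ Q ((1+k*t)*y,t)) (k*y) 1,
          Llin (fderiv ℝ P ((1+k*t)*y,t)) (1+k*t) 0, Llin (fderiv ℝ Q ((1+k*t)*y,t)) (1+k*t) 0,
          hw, hs, hedef]
      ring
    have hInt := intervalIntegral.integral_eq_sub_of_hasDerivAt hΦd
      ((hedcont1 t).intervalIntegrable 0 1)
    have hval : Φ 1 - Φ 0 = k * (k^2-1) * (P (1+k*t, t))^2 := by
      simp only [hPhidef, hedef, mul_one, mul_zero, zero_mul]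
      rw [hQa t ht, hQ0 t ht]
      ring
    rw [hInt, hval]
  have he0 : ∀ p : ℝ×ℝ, 0 ≤ e p := fun p => add_nonneg (mul_self_nonneg _) (mul_self_nonneg _)
  have E0 : E 0 = 0 := by
    refine integral_zero_of_zero_on_Ioo' (by norm_num) ?_
    intro y hy
    show (1 + k*0) * e ((1 + k*0)*y, 0) = 0
    have h1 : (1:ℝ) + k*0 = 1 := by ring
    rw [h1, one_mul, one_mul, hedef]
    simp only []
    rw [hPinit y hy, hQinit y ⟨hy.1.le, hy.2.le⟩]
    ring
  have Enonneg : ∀ t ∈ Icc (0:ℝ) T, 0 ≤ E t := by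
    intro t ht
    apply intervalIntegral.integral_nonneg (by norm_num : (0:ℝ) ≤ 1)
    intro y _
    show 0 ≤ (1 + k*t) * e ((1 + k*t)*y, t)
    have h1 : 0 ≤ 1 + k*t := by nlinarith [ht.1]
    exact mul_nonneg h1 (he0 _)
  have Eanti : AntitoneOn E (Icc 0 T) := by
    apply antitoneOn_of_deriv_nonpos (convex_Icc 0 T)
    · exact (Differentiable.continuous (fun t => (hE t).differentiableAt)).continuousOn
    · intro x hx
      exact ((hE x).differentiableAt).differentiableWithinAt
    · intro x hx
      rw [interior_Icc] at hx
      rw [(hE x).deriv, hEval x hx]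
      have hs := sq_nonneg (P (1+k*x, x))
      have hk2 : (0:ℝ) ≤ 1 - k^2 := by nlinarith
      nlinarith [mul_nonneg (mul_nonneg hk0.le hk2) hs]
  have Ezero : ∀ t ∈ Icc (0:ℝ) T, E t = 0 := by
    intro t ht
    have h1 : E t ≤ E 0 := Eanti (left_mem_Icc.mpr hT0.le) ht ht.1
    rw [E0] at h1
    exact le_antisymm h1 (Enonneg t ht)
  -- final extraction
  intro x t ht0 htT hx0 hx1
  have hA0 : (0:ℝ) < 1 + k*t := by nlinarith [mul_pos hk0 ht0]
  have hEt : E t = 0 := Ezero t ⟨ht0.le, htT.le⟩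
  have hecont1 : Continuous (fun s => e (s, t)) :=
    hecont.comp (continuous_id.prodMk continuous_const)
  have hchg : E t = ∫ ξ in (0:ℝ)..(1+k*t), e (ξ, t) := by
    show (∫ y in (0:ℝ)..1, (1 + k*t) * e ((1 + k*t)*y, t)) = _
    rw [intervalIntegral.integral_const_mul,
      intervalIntegral.integral_comp_mul_left (f := fun ξ => e (ξ, t)) (ne_of_gt hA0),
      smul_eq_mul, ← mul_assoc, mul_inv_cancel₀ (ne_of_gt hA0), one_mul, mul_zero, mul_one]
  set W : ℝ → ℝ := fun ξ => ∫ s in (0:ℝ)..ξ, e (s, t) with hWdef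
  have hWzero : ∀ ξ ∈ Icc (0:ℝ) (1+k*t), W ξ = 0 := by
    intro ξ hξ
    have h1 : 0 ≤ W ξ := intervalIntegral.integral_nonneg hξ.1 (fun s _ => he0 _)
    have h2 : W ξ + (∫ s in ξ..(1+k*t), e (s,t)) = W (1+k*t) :=
      intervalIntegral.integral_add_adjacent_intervals
        (hecont1.intervalIntegrable _ _) (hecont1.intervalIntegrable _ _)
    have h3 : 0 ≤ ∫ s in ξ..(1+k*t), e (s,t) :=
      intervalIntegral.integral_nonneg hξ.2 (fun s _ => he0 _)
    have h4 : W (1+k*t) = 0 := by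
      show (∫ s in (0:ℝ)..(1+k*t), e (s, t)) = 0
      rw [← hchg]
      exact hEt
    linarith
  have hezero : ∀ ξ ∈ Ioo (0:ℝ) (1+k*t), e (ξ, t) = 0 := by
    intro ξ hξ
    have hWd : HasDerivAt W (e (ξ, t)) ξ :=
      intervalIntegral.integral_hasDerivAt_right (hecont1.intervalIntegrable _ _)
        (hecont1.stronglyMeasurableAtFilter _ _) hecont1.continuousAt
    have hev : (fun _ : ℝ => (0:ℝ)) =ᶠ[nhds ξ] W :=
      Filter.eventuallyEq_of_mem (Ioo_mem_nhds hξ.1 hξ.2)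
        (fun s hs => (hWzero s ⟨hs.1.le, hs.2.le⟩).symm)
    exact (hWd.congr_of_eventuallyEq hev).unique (hasDerivAt_const ξ 0)
  have hPzero : ∀ y ∈ Ioo (0:ℝ) (1+k*t), P (y, t) = 0 := by
    intro y hy
    have h := hezero y hy
    rw [hedef] at h
    simp only [] at h
    nlinarith [mul_self_nonneg (P (y,t)), mul_self_nonneg (Q (y,t))]
  have hPcont1 : Continuous (fun y => P (y, t)) :=
    hPc.continuous.comp (continuous_id.prodMk continuous_const)
  have hFTC := intervalIntegral.integral_eq_sub_of_hasDerivAt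
    (f := fun y => u y t) (f' := fun y => P (y, t)) (a := 0) (b := x)
    (fun y _ => hPof y t) (hPcont1.intervalIntegrable _ _)
  have hzero : (∫ y in (0:ℝ)..x, P (y, t)) = 0 :=
    integral_zero_of_zero_on_Ioo' hx0.le
      (fun y hy => hPzero y ⟨hy.1, lt_trans hy.2 hx1⟩)
  rw [hzero] at hFTC
  have hu0 := hdir0 t ⟨ht0.le, htT.le⟩
  linarith [hFTC]
end

section
/- Fix 0 < k < 1 and T > 0, let α_k(t) = 1 + k t, and let Q̂ = {(x,t) ∈ ℝ² : 0 < t < T, 0 < x < α_k(t)}. Let u : ℝ² → ℝ be of class C² and satisfy ∂²u/∂t² = ∂²u/∂x² on Q̂ together with u(0,t) = 0 and u(α_k(t), t) = 0 for all t ∈ [0,T]. Define the energy E(t) = (1/2) ∫₀^{α_k(t)} ( (∂u/∂t(x,t))² + (∂u/∂x(x,t))² ) dx. Then E is differentiable on (0,T) with E'(t) = (k/2)(k² − 1) (∂u/∂x(α_k(t), t))² for every t ∈ (0,T); in particular, since 0 < k < 1, E is non-increasing on (0,T). -/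
open MeasureTheory intervalIntegral Set Metric

lemma hasDerivAt_slice_right {f : ℝ × ℝ → ℝ} {x t : ℝ} (hf : DifferentiableAt ℝ f (x, t)) :
    HasDerivAt (fun s => f (x, s)) (fderiv ℝ f (x, t) (0, 1)) t := by
  have hL : HasDerivAt (fun s : ℝ => ((x, s) : ℝ × ℝ)) (((0 : ℝ), (1 : ℝ))) t :=
    (hasDerivAt_const t x).prodMk (hasDerivAt_id t)
  simpa [Function.comp_def] using hf.hasFDerivAt.comp_hasDerivAt t hL

lemma hasDerivAt_slice_left {f : ℝ × ℝ → ℝ} {x t : ℝ} (hf : DifferentiableAt ℝ f (x, t)) :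
    HasDerivAt (fun y => f (y, t)) (fderiv ℝ f (x, t) (1, 0)) x := by
  have hL : HasDerivAt (fun y : ℝ => ((y, t) : ℝ × ℝ)) (((1 : ℝ), (0 : ℝ))) x :=
    (hasDerivAt_id x).prodMk (hasDerivAt_const x t)
  simpa [Function.comp_def] using hf.hasFDerivAt.comp_hasDerivAt x hL

lemma moving_integral_hasDerivAt {g : ℝ × ℝ → ℝ} (hg : ContDiff ℝ 1 g) (k t₀ : ℝ) :
    HasDerivAt (fun t => ∫ x in (0:ℝ)..(1 + k * t), g (x, t))
      (k * g (1 + k * t₀, t₀) + ∫ x in (0:ℝ)..(1 + k * t₀), fderiv ℝ g (x, t₀) (0, 1)) t₀ := by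
  set a : ℝ := 1 + k * t₀ with ha
  have hgc : Continuous g := hg.continuous
  have hsl : ∀ t : ℝ, Continuous fun x => g (x, t) := fun t =>
    hgc.comp (continuous_id.prodMk continuous_const)
  have hint : ∀ c d t : ℝ, IntervalIntegrable (fun x => g (x, t)) volume c d := fun c d t =>
    (hsl t).intervalIntegrable c d
  -- the t-partial derivative of g
  set gt : ℝ × ℝ → ℝ := fun p => fderiv ℝ g p (0, 1) with hgt_def
  have hgtc : Continuous gt :=
    (ContinuousLinearMap.apply ℝ ℝ (((0:ℝ), (1:ℝ)))).continuous.comp (hg.continuous_fderiv (by norm_num))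
  have hgtsl : ∀ t : ℝ, Continuous fun x => gt (x, t) := fun t =>
    hgtc.comp (continuous_id.prodMk continuous_const)
  have hdiffg : Differentiable ℝ g := hg.differentiable (by norm_num)
  -- Part 1 : fixed-endpoint part
  obtain ⟨C, hC⟩ := ((isCompact_uIcc (a := (0:ℝ)) (b := a)).prod
      (isCompact_Icc (a := t₀ - 1) (b := t₀ + 1))).exists_bound_of_continuousOn hgtc.continuousOn
  have part1 : HasDerivAt (fun t => ∫ x in (0:ℝ)..a, g (x, t))
      (∫ x in (0:ℝ)..a, gt (x, t₀)) t₀ := by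
    have h := hasDerivAt_integral_of_dominated_loc_of_deriv_le
      (F := fun t x => g (x, t)) (F' := fun t x => gt (x, t)) (x₀ := t₀)
      (a := 0) (b := a) (μ := volume) (bound := fun _ => C) (s := ball t₀ 1) (ball_mem_nhds t₀ one_pos)
      (Filter.Eventually.of_forall fun t => (hsl t).aestronglyMeasurable)
      (hint 0 a t₀)
      ((hgtsl t₀).aestronglyMeasurable)
      ?_ ?_ ?_
    · exact h.2
    · refine Filter.Eventually.of_forall fun x hx t ht => ?_
      refine hC (x, t) ⟨?_, ?_⟩
      · exact uIoc_subset_uIcc hx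
      · have : |t - t₀| < 1 := by simpa [Real.dist_eq] using ht
        constructor <;> [linarith [abs_le.mp this.le |>.1]; linarith [abs_le.mp this.le |>.2]]
    · exact intervalIntegrable_const
    · refine Filter.Eventually.of_forall fun x hx t ht => ?_
      exact hasDerivAt_slice_right (hdiffg (x, t))
  -- Part 2a : FTC part for the moving endpoint
  have hφ : HasDerivAt (fun s => ∫ x in a..s, g (x, t₀)) (g (a, t₀)) a :=
    integral_hasDerivAt_right (hint a a t₀)
      ((hsl t₀).stronglyMeasurable.stronglyMeasurableAtFilter) ((hsl t₀).continuousAt)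
  have hα : HasDerivAt (fun t : ℝ => 1 + k * t) k t₀ := by
    simpa using ((hasDerivAt_id t₀).const_mul k).const_add 1
  have part2a : HasDerivAt (fun t => ∫ x in a..(1 + k * t), g (x, t₀)) (g (a, t₀) * k) t₀ := by
    have := hφ.comp t₀ (h := fun t : ℝ => 1 + k * t) (by simpa [ha] using hα)
    simpa [ha, Function.comp_def] using this
  -- Part 2b : the remainder is o(t - t₀)
  have part2b : HasDerivAt (fun t => ∫ x in a..(1 + k * t), (g (x, t) - g (x, t₀))) 0 t₀ := by
    rw [hasDerivAt_iff_isLittleO]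
    have hR0 : (∫ x in a..(1 + k * t₀), (g (x, t₀) - g (x, t₀))) = 0 := by
      simp
    simp only [hR0, integral_same, smul_zero, sub_zero, ← ha]
    rw [Asymptotics.isLittleO_iff]
    intro c hc
    -- uniform continuity on a compact set
    set K : Set (ℝ × ℝ) := Icc (a - |k| - 1) (a + |k| + 1) ×ˢ Icc (t₀ - 1) (t₀ + 1) with hK
    have hKc : IsCompact K := isCompact_Icc.prod isCompact_Icc
    have huc := uniformContinuousOn_iff.mp (hKc.uniformContinuousOn_of_continuous hgc.continuousOn)
    obtain ⟨δ, hδ0, hδ⟩ := huc (c / (|k| + 1)) (by positivity)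
    have hδ1 : (0:ℝ) < min δ 1 := lt_min hδ0 one_pos
    rw [Metric.eventually_nhds_iff]
    refine ⟨min δ 1, hδ1, fun t ht => ?_⟩
    have htd : |t - t₀| < min δ 1 := by simpa [Real.dist_eq] using ht
    have htd1 : |t - t₀| ≤ 1 := le_of_lt (lt_of_lt_of_le htd (min_le_right _ _))
    have htdδ : |t - t₀| < δ := lt_of_lt_of_le htd (min_le_left _ _)
    have hend : |(1 + k * t) - a| = |k| * |t - t₀| := by
      rw [ha]; rw [← abs_mul]; ring_nf
    have key : ∀ x ∈ Set.uIoc a (1 + k * t), ‖g (x, t) - g (x, t₀)‖ ≤ c / (|k| + 1) := by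
      intro x hx
      have hx' : x ∈ Set.uIcc a (1 + k * t) := uIoc_subset_uIcc hx
      have hxa : |x - a| ≤ |k| := by
        have h1 : |x - a| ≤ |(1 + k * t) - a| := by
          rcases le_or_gt a (1 + k * t) with h | h
          · rw [Set.uIcc_of_le h] at hx'
            rw [abs_sub_le_iff]
            constructor
            · have := hx'.2; have := hx'.1
              have : (1 + k*t) - a ≤ |(1 + k*t) - a| := le_abs_self _
              linarith [hx'.2, le_abs_self ((1 + k*t) - a)]
            · linarith [hx'.1, abs_nonneg ((1 + k*t) - a)]
          · rw [Set.uIcc_of_ge h.le] at hx'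
            rw [abs_sub_le_iff]
            constructor
            · linarith [hx'.2, abs_nonneg ((1 + k*t) - a)]
            · linarith [hx'.1, neg_le_abs ((1 + k*t) - a), neg_abs_le ((1+k*t) - a)]
        calc |x - a| ≤ |(1 + k * t) - a| := h1
          _ = |k| * |t - t₀| := hend
          _ ≤ |k| * 1 := by nlinarith [abs_nonneg k]
          _ = |k| := mul_one _
      have hxK : (x, t) ∈ K ∧ (x, t₀) ∈ K := by
        have h1 := abs_le.mp hxa
        have h2 := abs_le.mp htd1
        refine ⟨⟨⟨by linarith [h1.1], by linarith [h1.2]⟩, ⟨by linarith [h2.1], by linarith [h2.2]⟩⟩,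
          ⟨⟨by linarith [h1.1], by linarith [h1.2]⟩, ⟨by linarith, by linarith⟩⟩⟩
      have hdist : dist ((x, t) : ℝ × ℝ) (x, t₀) < δ := by
        rw [Prod.dist_eq]
        simp only [dist_self]
        simpa [Real.dist_eq, max_lt_iff, hδ0] using htdδ
      have := hδ _ hxK.1 _ hxK.2 hdist
      simpa [Real.dist_eq, Real.norm_eq_abs] using this.le
    calc ‖∫ x in a..(1 + k * t), (g (x, t) - g (x, t₀))‖
        ≤ c / (|k| + 1) * |(1 + k * t) - a| :=
          intervalIntegral.norm_integral_le_of_norm_le_const key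
      _ = c / (|k| + 1) * (|k| * |t - t₀|) := by rw [hend]
      _ ≤ c * ‖t - t₀‖ := by
          rw [Real.norm_eq_abs]
          rw [div_mul_eq_mul_div, mul_comm |k| |t - t₀|, ← mul_assoc]
          rw [div_le_iff₀ (by positivity)]
          nlinarith [abs_nonneg (t - t₀), abs_nonneg k, hc.le]
  -- assemble
  have hsplit : ∀ t : ℝ, (∫ x in (0:ℝ)..(1 + k * t), g (x, t))
      = (∫ x in (0:ℝ)..a, g (x, t)) + ∫ x in a..(1 + k * t), g (x, t) := fun t =>
    (integral_add_adjacent_intervals (hint 0 a t) (hint a _ t)).symm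
  have hsplit2 : ∀ t : ℝ, (∫ x in a..(1 + k * t), g (x, t))
      = (∫ x in a..(1 + k * t), g (x, t₀)) + ∫ x in a..(1 + k * t), (g (x, t) - g (x, t₀)) := by
    intro t
    rw [← intervalIntegral.integral_add (hint a _ t₀) ((hint a _ t).sub (hint a _ t₀))]
    congr 1; ext x; ring
  have total : HasDerivAt (fun t => (∫ x in (0:ℝ)..a, g (x, t))
      + ((∫ x in a..(1 + k * t), g (x, t₀)) + ∫ x in a..(1 + k * t), (g (x, t) - g (x, t₀))))
      ((∫ x in (0:ℝ)..a, gt (x, t₀)) + (g (a, t₀) * k + 0)) t₀ :=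
    part1.add (part2a.add part2b)
  have heq : (fun t => ∫ x in (0:ℝ)..(1 + k * t), g (x, t))
      = fun t => (∫ x in (0:ℝ)..a, g (x, t))
      + ((∫ x in a..(1 + k * t), g (x, t₀)) + ∫ x in a..(1 + k * t), (g (x, t) - g (x, t₀))) := by
    funext t; rw [hsplit t, hsplit2 t]
  rw [heq]
  convert total using 1
  ring


/-- energy identity for the wave equation on the moving domain
`Q̂ = {(x,t) : 0 < t < T, 0 < x < 1 + k t}`, `0 < k < 1`: the energy
`E(t) = (1/2) ∫₀^{1+kt} (u_t² + u_x²) dx` is differentiable on `(0,T)` with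
`E'(t) = (k/2)(k² − 1) u_x(1+kt, t)²`, hence non-increasing on `(0,T)`.
Here `u x t` denotes `u(x, t)`. -/
theorem wave_moving_boundary_energy_identity
    (k T : ℝ) (hk0 : 0 < k) (hk1 : k < 1) (hT0 : 0 < T)
    (u : ℝ → ℝ → ℝ)
    (hreg : ContDiff ℝ 2 (fun p : ℝ × ℝ => u p.1 p.2))
    (hwave : ∀ x t : ℝ, 0 < t → t < T → 0 < x → x < 1 + k * t →
      deriv (fun s => deriv (fun s' => u x s') s) t
        = deriv (fun y => deriv (fun y' => u y' t) y) x)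
    (hdir0 : ∀ t ∈ Set.Icc (0 : ℝ) T, u 0 t = 0)
    (hdir1 : ∀ t ∈ Set.Icc (0 : ℝ) T, u (1 + k * t) t = 0)
    (E : ℝ → ℝ)
    (hE : ∀ t : ℝ, E t = (1 / 2) *
      ∫ x in (0 : ℝ)..(1 + k * t),
        (deriv (fun s => u x s) t) ^ 2 + (deriv (fun y => u y t) x) ^ 2) :
    (∀ t ∈ Set.Ioo (0 : ℝ) T,
        HasDerivAt E ((k / 2) * (k ^ 2 - 1) * (deriv (fun y => u y t) (1 + k * t)) ^ 2) t) ∧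
      AntitoneOn E (Set.Ioo (0 : ℝ) T) := by
  have hU2 : ContDiff ℝ 2 (fun p : ℝ × ℝ => u p.1 p.2) := hreg
  set U : ℝ × ℝ → ℝ := fun p => u p.1 p.2 with hUdef
  have hUd : Differentiable ℝ U := hU2.differentiable (by norm_num)
  set V : ℝ × ℝ → ℝ := fun p => fderiv ℝ U p (0, 1) with hVdef
  set W : ℝ × ℝ → ℝ := fun p => fderiv ℝ U p (1, 0) with hWdef
  have hfd1 : ContDiff ℝ 1 (fderiv ℝ U) := hU2.fderiv_right (by norm_num)
  have hV1 : ContDiff ℝ 1 V :=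
    (ContinuousLinearMap.apply ℝ ℝ (((0:ℝ), (1:ℝ)))).contDiff.comp hfd1
  have hW1 : ContDiff ℝ 1 W :=
    (ContinuousLinearMap.apply ℝ ℝ (((1:ℝ), (0:ℝ)))).contDiff.comp hfd1
  set g : ℝ × ℝ → ℝ := fun p => V p ^ 2 + W p ^ 2 with hgdef
  have hg1 : ContDiff ℝ 1 g := (hV1.pow 2).add (hW1.pow 2)
  have hVslice : ∀ x t : ℝ, HasDerivAt (fun s => u x s) (V (x, t)) t := fun x t =>
    hasDerivAt_slice_right (hUd (x, t))
  have hWslice : ∀ x t : ℝ, HasDerivAt (fun y => u y t) (W (x, t)) x := fun x t =>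
    hasDerivAt_slice_left (hUd (x, t))
  have hVderiv : ∀ x t : ℝ, deriv (fun s => u x s) t = V (x, t) := fun x t => (hVslice x t).deriv
  have hWderiv : ∀ x t : ℝ, deriv (fun y => u y t) x = W (x, t) := fun x t => (hWslice x t).deriv
  have hE' : E = fun t => (1 / 2) * ∫ x in (0:ℝ)..(1 + k * t), g (x, t) := by
    funext t
    rw [hE t]
    congr 1
    congr 1
    funext x
    rw [hVderiv, hWderiv]
  -- Clairaut
  have hsymm : ∀ p : ℝ × ℝ, IsSymmSndFDerivAt ℝ U p := fun p =>
    hU2.contDiffAt.isSymmSndFDerivAt (by norm_num)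
  have hfdd : Differentiable ℝ (fderiv ℝ U) := hfd1.differentiable (by norm_num)
  have hVfd : ∀ p v : ℝ × ℝ, fderiv ℝ V p v = fderiv ℝ (fderiv ℝ U) p v (0, 1) := by
    intro p v
    have h : HasFDerivAt V ((ContinuousLinearMap.apply ℝ ℝ (((0:ℝ), (1:ℝ)))).comp
        (fderiv ℝ (fderiv ℝ U) p)) p :=
      (ContinuousLinearMap.apply ℝ ℝ (((0:ℝ), (1:ℝ)))).hasFDerivAt.comp p (hfdd p).hasFDerivAt
    rw [h.fderiv]; rfl
  have hWfd : ∀ p v : ℝ × ℝ, fderiv ℝ W p v = fderiv ℝ (fderiv ℝ U) p v (1, 0) := by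
    intro p v
    have h : HasFDerivAt W ((ContinuousLinearMap.apply ℝ ℝ (((1:ℝ), (0:ℝ)))).comp
        (fderiv ℝ (fderiv ℝ U) p)) p :=
      (ContinuousLinearMap.apply ℝ ℝ (((1:ℝ), (0:ℝ)))).hasFDerivAt.comp p (hfdd p).hasFDerivAt
    rw [h.fderiv]; rfl
  have hClair : ∀ p : ℝ × ℝ, fderiv ℝ W p (0, 1) = fderiv ℝ V p (1, 0) := fun p => by
    rw [hWfd, hVfd]; exact hsymm p _ _
  -- wave equation in terms of V, W
  have hwave' : ∀ x t : ℝ, 0 < t → t < T → 0 < x → x < 1 + k * t →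
      fderiv ℝ V (x, t) (0, 1) = fderiv ℝ W (x, t) (1, 0) := by
    intro x t ht htT hx hxb
    have h1 : (fun s => deriv (fun s' => u x s') s) = fun s => V (x, s) := by
      funext s; exact (hVslice x s).deriv
    have h2 : (fun y => deriv (fun y' => u y' t) y) = fun y => W (y, t) := by
      funext y; exact (hWslice y t).deriv
    have h := hwave x t ht htT hx hxb
    rw [h1, h2] at h
    rwa [(hasDerivAt_slice_right (hV1.differentiable (by norm_num) (x, t))).deriv,
      (hasDerivAt_slice_left (hW1.differentiable (by norm_num) (x, t))).deriv] at h
  -- t-derivative of g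
  have hgt_eq : ∀ x t : ℝ, fderiv ℝ g (x, t) (0, 1)
      = 2 * V (x, t) * fderiv ℝ V (x, t) (0, 1) + 2 * W (x, t) * fderiv ℝ W (x, t) (0, 1) := by
    intro x t
    have h1 : HasDerivAt (fun s => g (x, s)) (fderiv ℝ g (x, t) (0, 1)) t :=
      hasDerivAt_slice_right (hg1.differentiable (by norm_num) (x, t))
    have h2 : HasDerivAt (fun s => g (x, s))
        ((2:ℕ) * V (x, t) ^ 1 * fderiv ℝ V (x, t) (0, 1)
          + (2:ℕ) * W (x, t) ^ 1 * fderiv ℝ W (x, t) (0, 1)) t :=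
      ((hasDerivAt_slice_right (hV1.differentiable (by norm_num) (x, t))).pow 2).add
        ((hasDerivAt_slice_right (hW1.differentiable (by norm_num) (x, t))).pow 2)
    have := h1.unique h2
    rw [this]; push_cast; ring
  -- main derivative statement
  have hmain : ∀ t ∈ Set.Ioo (0 : ℝ) T,
      HasDerivAt E ((k / 2) * (k ^ 2 - 1) * (deriv (fun y => u y t) (1 + k * t)) ^ 2) t := by
    rintro t₀ ⟨ht0, htT⟩
    have key := moving_integral_hasDerivAt hg1 k t₀
    set a : ℝ := 1 + k * t₀ with hadef
    have ha0 : 0 < a := by nlinarith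
    -- FTC for the interior integral
    have hFTC : (∫ x in (0:ℝ)..a, fderiv ℝ g (x, t₀) (0, 1))
        = 2 * V (a, t₀) * W (a, t₀) - 2 * V (0, t₀) * W (0, t₀) := by
      have hcont : ContinuousOn (fun y => 2 * V (y, t₀) * W (y, t₀)) (Set.Icc 0 a) := by
        apply Continuous.continuousOn
        have hVc : Continuous fun y : ℝ => V (y, t₀) :=
          (hV1.continuous).comp (continuous_id.prodMk continuous_const)
        have hWc : Continuous fun y : ℝ => W (y, t₀) :=
          (hW1.continuous).comp (continuous_id.prodMk continuous_const)
        exact (continuous_const.mul hVc).mul hWc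
      have hder : ∀ x ∈ Set.Ioo (0:ℝ) a,
          HasDerivWithinAt (fun y => 2 * V (y, t₀) * W (y, t₀))
            (fderiv ℝ g (x, t₀) (0, 1)) (Set.Ioi x) x := by
        intro x hx
        have h1 : HasDerivAt (fun y => 2 * V (y, t₀) * W (y, t₀))
            ((2 * fderiv ℝ V (x, t₀) (1, 0)) * W (x, t₀)
              + (2 * V (x, t₀)) * fderiv ℝ W (x, t₀) (1, 0)) x :=
          (((hasDerivAt_slice_left (hV1.differentiable (by norm_num) (x, t₀)))).const_mul 2).mul
            (hasDerivAt_slice_left (hW1.differentiable (by norm_num) (x, t₀)))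
        have heq : fderiv ℝ g (x, t₀) (0, 1)
            = (2 * fderiv ℝ V (x, t₀) (1, 0)) * W (x, t₀)
              + (2 * V (x, t₀)) * fderiv ℝ W (x, t₀) (1, 0) := by
          rw [hgt_eq, hwave' x t₀ ht0 htT hx.1 hx.2, hClair]
          ring
        rw [heq]
        exact h1.hasDerivWithinAt
      have hgtint : IntervalIntegrable (fun x => fderiv ℝ g (x, t₀) (0, 1)) volume 0 a := by
        have : Continuous fun x : ℝ => fderiv ℝ g (x, t₀) (0, 1) := by
          have hgtc : Continuous fun p : ℝ × ℝ => fderiv ℝ g p (0, 1) :=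
            (ContinuousLinearMap.apply ℝ ℝ (((0:ℝ), (1:ℝ)))).continuous.comp
              (hg1.continuous_fderiv (by norm_num))
          exact hgtc.comp (continuous_id.prodMk continuous_const)
        exact this.intervalIntegrable 0 a
      have := intervalIntegral.integral_eq_sub_of_hasDeriv_right_of_le ha0.le hcont hder hgtint
      rw [this]
    -- boundary values
    have hV0 : V (0, t₀) = 0 := by
      have hev : (fun s => u 0 s) =ᶠ[nhds t₀] fun _ => (0:ℝ) := by
        have hmem : Set.Ioo (0:ℝ) T ∈ nhds t₀ := isOpen_Ioo.mem_nhds ⟨ht0, htT⟩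
        filter_upwards [hmem] with s hs using hdir0 s (Set.Ioo_subset_Icc_self hs)
      have h1 : HasDerivAt (fun _ : ℝ => (0:ℝ)) (V (0, t₀)) t₀ :=
        (hVslice 0 t₀).congr_of_eventuallyEq hev.symm
      exact h1.unique (hasDerivAt_const t₀ 0)
    have hbd : k * W (a, t₀) + V (a, t₀) = 0 := by
      have hline : HasDerivAt (fun t : ℝ => ((1 + k * t, t) : ℝ × ℝ)) ((k, 1)) t₀ :=
        (by simpa using ((hasDerivAt_id t₀).const_mul k).const_add 1 : HasDerivAt
          (fun t : ℝ => 1 + k * t) k t₀).prodMk (hasDerivAt_id t₀)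
      have hcomp : HasDerivAt (fun t => U (1 + k * t, t)) (fderiv ℝ U (a, t₀) (k, 1)) t₀ := by
        have h := HasFDerivAt.comp_hasDerivAt (f := fun t : ℝ => ((1 + k * t, t) : ℝ × ℝ)) t₀ (hUd (a, t₀)).hasFDerivAt hline
        simpa [Function.comp_def] using h
      have hev : (fun t => U (1 + k * t, t)) =ᶠ[nhds t₀] fun _ => (0:ℝ) := by
        have hmem : Set.Ioo (0:ℝ) T ∈ nhds t₀ := isOpen_Ioo.mem_nhds ⟨ht0, htT⟩
        filter_upwards [hmem] with s hs using hdir1 s (Set.Ioo_subset_Icc_self hs)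
      have h0' : fderiv ℝ U (a, t₀) (k, 1) = 0 :=
        (hcomp.congr_of_eventuallyEq hev.symm).unique (hasDerivAt_const t₀ 0)
      have hdecomp : ((k : ℝ), (1 : ℝ)) = k • (((1:ℝ), (0:ℝ))) + (((0:ℝ), (1:ℝ))) := by
        simp [Prod.ext_iff]
      calc k * W (a, t₀) + V (a, t₀)
          = fderiv ℝ U (a, t₀) (k, 1) := by
            rw [hdecomp, ContinuousLinearMap.map_add, ContinuousLinearMap.map_smul]
            simp [hVdef, hWdef, smul_eq_mul]
        _ = 0 := h0'
    have hVa : V (a, t₀) = -(k * W (a, t₀)) := by linarith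
    rw [hE']
    have final : HasDerivAt _ _ t₀ := HasDerivAt.const_mul ((1:ℝ)/2) key
    refine final.congr_deriv ?_
    rw [hFTC, hWderiv]
    simp only [hgdef]
    rw [hV0, hVa]
    ring
  refine ⟨hmain, ?_⟩
  apply antitoneOn_of_deriv_nonpos (convex_Ioo 0 T)
  · intro t ht
    exact ((hmain t ht).differentiableAt.continuousAt).continuousWithinAt
  · rw [interior_Ioo]
    intro t ht
    exact (hmain t ht).differentiableAt.differentiableWithinAt
  · rw [interior_Ioo]
    intro t ht
    rw [(hmain t ht).deriv]
    have hsq : (0:ℝ) ≤ (deriv (fun y => u y t) (1 + k * t)) ^ 2 := sq_nonneg _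
    have h1 : k ^ 2 - 1 ≤ 0 := by nlinarith
    have h2 : 0 ≤ k / 2 := by positivity
    nlinarith [mul_nonneg h2 hsq]
end
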